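/- Spectral radius of thinned specializations: let M be as in the single-component specialization construction with all blocks U, Z, Y_1,…,Y_y, W_1,…,W_w having nonnegative entries, and let T be any subset of P = {1,…,y}×{1,…,w}. Let M̂_T be the thinned specialization of M over T: the square matrix of size ℓ + |T|·m with index set B ⊕ (T × C), whose (B,B) block is U, whose (B, {(i,j)}×C) block is Y_i and ({(i,j)}×C, B) block is W_j for (i,j) ∈ T, whose ({(i,j)}×C, {(i,j)}×C) block is Z, and whose blocks between distinct elements of T are zero. Then ρ(M̂_T) ≤ ρ(M). -/

import Mathlib

open Matrix Filter Topology

open scoped ENNReal NNReal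

attribute [local instance] Matrix.linftyOpNormedAddCommGroup Matrix.linftyOpNormedRing
  Matrix.linftyOpNormedAlgebra

set_option linter.unusedSectionVars false
set_option maxHeartbeats 1000000

private lemma multiset_fold_max_nonneg (s : Multiset ℝ) : 0 ≤ s.fold max 0 := by
  induction s using Multiset.induction_on with
  | empty => simp
  | cons a s ih => rw [Multiset.fold_cons_left]; exact le_max_of_le_right ih

private lemma le_multiset_fold_max {s : Multiset ℝ} {x : ℝ} (hx : x ∈ s) :
    x ≤ s.fold max 0 := by
  induction s using Multiset.induction_on with
  | empty => simp at hx
  | cons a s ih =>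
    rw [Multiset.fold_cons_left]
    rcases Multiset.mem_cons.1 hx with h | h
    · exact h ▸ le_max_left _ _
    · exact le_max_of_le_right (ih h)

private lemma multiset_fold_max_le {s : Multiset ℝ} {r : ℝ} (h0 : 0 ≤ r)
    (h : ∀ x ∈ s, x ≤ r) : s.fold max 0 ≤ r := by
  induction s using Multiset.induction_on with
  | empty => simpa using h0
  | cons a s ih =>
    rw [Multiset.fold_cons_left]
    exact max_le (h a (Multiset.mem_cons_self a s))
      (ih fun x hx => h x (Multiset.mem_cons_of_mem hx))

private lemma mem_spectrum_iff_root {n : Type*} [Fintype n] [DecidableEq n] [Nonempty n]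
    (M : Matrix n n ℂ) (t : ℂ) :
    t ∈ spectrum ℂ M ↔ M.charpoly.IsRoot t := by
  have hdet : M.charpoly.eval t = (algebraMap ℂ (Matrix n n ℂ) t - M).det := by
    rw [Matrix.charpoly, ← Polynomial.coe_evalRingHom, RingHom.map_det]
    congr 1
    ext i j
    by_cases h : i = j <;>
      simp [Matrix.charmatrix_apply, Matrix.algebraMap_matrix_apply, h,
        Matrix.one_apply, Matrix.diagonal_apply, Matrix.sub_apply]
  rw [spectrum.mem_iff, Matrix.isUnit_iff_isUnit_det, isUnit_iff_ne_zero,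
    Polynomial.IsRoot.def, hdet, not_not]


/-- The spectral radius of a square real matrix: the maximum of `|λ|` over the complex
roots `λ` of its characteristic polynomial (and `0` if there are none). -/
noncomputable def specRad {n : Type*} [Fintype n] [DecidableEq n]
    (A : Matrix n n ℝ) : ℝ :=
  (((Matrix.charpoly (A.map Complex.ofReal)).roots).map (fun z : ℂ => ‖z‖)).fold max 0

private lemma map_pow_ofReal {n : Type*} [Fintype n] [DecidableEq n]
    (A : Matrix n n ℝ) (k : ℕ) :
    (A ^ k).map Complex.ofReal = (A.map Complex.ofReal) ^ k := by
  have h := map_pow (Complex.ofRealHom.mapMatrix : Matrix n n ℝ →+* Matrix n n ℂ) A k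
  simpa [RingHom.mapMatrix_apply, Matrix.map, Complex.ofRealHom_eq_coe] using h

private lemma specRad_le_of_pow_le
    {n₁ n₂ : Type*} [Fintype n₁] [DecidableEq n₁] [Nonempty n₁]
    [Fintype n₂] [DecidableEq n₂] [Nonempty n₂]
    (A : Matrix n₁ n₁ ℝ) (N : Matrix n₂ n₂ ℝ)
    (C : ℝ≥0) (hC : 0 < C)
    (h : ∀ k : ℕ, ‖(A ^ k).map Complex.ofReal‖₊ ≤ C * ‖(N ^ k).map Complex.ofReal‖₊) :
    specRad A ≤ specRad N := by
  classical
  set Ac := A.map Complex.ofReal with hAc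
  set Nc := N.map Complex.ofReal with hNc
  have hcomplete₁ : CompleteSpace (Matrix n₁ n₁ ℂ) := FiniteDimensional.complete ℂ _
  have hcomplete₂ : CompleteSpace (Matrix n₂ n₂ ℂ) := FiniteDimensional.complete ℂ _
  have hN0 : (0:ℝ) ≤ specRad N := multiset_fold_max_nonneg _
  -- step B : spectralRadius of Nc ≤ ofReal (specRad N)
  have hB : spectralRadius ℂ Nc ≤ ENNReal.ofReal (specRad N) := by
    rw [spectralRadius]
    refine iSup₂_le fun lam hlam => ?_
    have hroot : lam ∈ (Matrix.charpoly Nc).roots := by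
      rw [Polynomial.mem_roots ((Matrix.charpoly_monic Nc).ne_zero)]
      exact (mem_spectrum_iff_root Nc lam).1 hlam
    have : ‖lam‖ ≤ specRad N :=
      le_multiset_fold_max (Multiset.mem_map_of_mem _ hroot)
    calc (‖lam‖₊ : ℝ≥0∞) = ENNReal.ofReal ‖lam‖ := by rw [ofReal_norm, enorm_eq_nnnorm]
      _ ≤ ENNReal.ofReal (specRad N) := ENNReal.ofReal_le_ofReal this
  -- main bound for each root of Ac's charpoly
  refine multiset_fold_max_le hN0 ?_
  intro x hx
  obtain ⟨mu, hmu, rfl⟩ := Multiset.mem_map.1 hx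
  have hmuspec : mu ∈ spectrum ℂ Ac :=
    (mem_spectrum_iff_root Ac mu).2 (Polynomial.isRoot_of_mem_roots hmu)
  -- step A: key per-k bound
  have key : ∀ k : ℕ, 1 ≤ k →
      (‖mu‖₊ : ℝ≥0∞) ≤ ((C : ℝ≥0∞) ^ (1/(k:ℝ))) * ((‖Nc ^ k‖₊ : ℝ≥0∞) ^ (1/(k:ℝ))) := by
    intro k hk
    have hpow : mu ^ k ∈ spectrum ℂ (Ac ^ k) :=
      spectrum.pow_image_subset Ac k ⟨mu, hmuspec, rfl⟩
    have h1 : ‖mu ^ k‖ ≤ ‖Ac ^ k‖ := spectrum.norm_le_norm_of_mem hpow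
    have h2 : ‖Ac ^ k‖₊ ≤ C * ‖Nc ^ k‖₊ := by
      have := h k
      rwa [hAc, hNc, ← map_pow_ofReal A k, ← map_pow_ofReal N k]
    have h3 : ‖mu‖₊ ^ k ≤ C * ‖Nc ^ k‖₊ := by
      have : ‖mu ^ k‖₊ ≤ ‖Ac ^ k‖₊ := h1
      rw [nnnorm_pow] at this
      exact this.trans h2
    have h4 : ((‖mu‖₊ : ℝ≥0∞) ^ (k:ℕ)) ≤ (C : ℝ≥0∞) * (‖Nc ^ k‖₊ : ℝ≥0∞) := by
      exact_mod_cast h3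
    have hk0 : (k:ℝ) ≠ 0 := by positivity
    calc (‖mu‖₊ : ℝ≥0∞) = (((‖mu‖₊ : ℝ≥0∞) ^ (k:ℕ)) ^ (1/(k:ℝ))) := by
          rw [← ENNReal.rpow_natCast, ← ENNReal.rpow_mul, mul_one_div, div_self hk0,
            ENNReal.rpow_one]
      _ ≤ (((C : ℝ≥0∞) * (‖Nc ^ k‖₊ : ℝ≥0∞)) ^ (1/(k:ℝ))) :=
          ENNReal.rpow_le_rpow h4 (by positivity)
      _ = _ := ENNReal.mul_rpow_of_ne_top ENNReal.coe_ne_top ENNReal.coe_ne_top _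
  -- limits
  have hlim1 : Tendsto (fun k : ℕ => ((C : ℝ≥0∞) ^ (1/(k:ℝ)))) atTop (𝓝 1) := by
    have hr : Tendsto (fun k : ℕ => ((C:ℝ) ^ (1/(k:ℝ)))) atTop (𝓝 1) := by
      have hc : ContinuousAt ((C:ℝ) ^ · : ℝ → ℝ) 0 :=
        Real.continuousAt_const_rpow (by exact_mod_cast hC.ne')
      have := hc.tendsto.comp tendsto_one_div_atTop_nhds_zero_nat
      simpa [Real.rpow_zero, Function.comp_def] using this
    have hnn : Tendsto (fun k : ℕ => (C ^ (1/(k:ℝ)) : ℝ≥0)) atTop (𝓝 1) := by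
      rw [← NNReal.tendsto_coe]
      simpa [NNReal.coe_rpow] using hr
    have := (ENNReal.tendsto_coe).2 hnn
    simpa [ENNReal.coe_rpow_of_ne_zero hC.ne'] using this
  have hlim2 := spectrum.pow_nnnorm_pow_one_div_tendsto_nhds_spectralRadius Nc
  have hlim : Tendsto (fun k : ℕ => ((C : ℝ≥0∞) ^ (1/(k:ℝ))) * ((‖Nc ^ k‖₊ : ℝ≥0∞) ^ (1/(k:ℝ))))
      atTop (𝓝 (spectralRadius ℂ Nc)) := by
    have := ENNReal.Tendsto.mul hlim1 (Or.inl one_ne_zero) hlim2 (Or.inr ENNReal.one_ne_top)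
    simpa using this
  have hle : (‖mu‖₊ : ℝ≥0∞) ≤ spectralRadius ℂ Nc := by
    refine ge_of_tendsto hlim ?_
    filter_upwards [eventually_ge_atTop 1] with k hk using key k hk
  have : (‖mu‖₊ : ℝ≥0∞) ≤ ENNReal.ofReal (specRad N) := hle.trans hB
  rw [← enorm_eq_nnnorm, ← ofReal_norm,
    ENNReal.ofReal_le_ofReal_iff hN0] at this
  exact this

/-- The original block matrix `M = [[U, Y],[W, Z]]` with `Y = ΣY_i`, `W = ΣW_j`. -/
def origMatrix {l m y w : ℕ}
    (U : Matrix (Fin l) (Fin l) ℝ) (Z : Matrix (Fin m) (Fin m) ℝ)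
    (Y : Fin y → Matrix (Fin l) (Fin m) ℝ) (W : Fin w → Matrix (Fin m) (Fin l) ℝ) :
    Matrix (Fin l ⊕ Fin m) (Fin l ⊕ Fin m) ℝ :=
  Matrix.fromBlocks U (∑ i, Y i) (∑ j, W j) Z

/-- The thinned specialization `M̂_T` of `M` over a subset `T` of the branch pairs
`P = {1,…,y} × {1,…,w}`: only the copies of `Z` indexed by `T` are kept. -/
def thinnedSpecialization {l m y w : ℕ}
    (U : Matrix (Fin l) (Fin l) ℝ) (Z : Matrix (Fin m) (Fin m) ℝ)
    (Y : Fin y → Matrix (Fin l) (Fin m) ℝ) (W : Fin w → Matrix (Fin m) (Fin l) ℝ)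
    (T : Finset (Fin y × Fin w)) :
    Matrix (Fin l ⊕ (↥T × Fin m)) (Fin l ⊕ (↥T × Fin m)) ℝ :=
  fun r c =>
    match r, c with
    | Sum.inl a, Sum.inl b => U a b
    | Sum.inl a, Sum.inr (p, c') => Y p.1.1 a c'
    | Sum.inr (p, r'), Sum.inl b => W p.1.2 r' b
    | Sum.inr (p, r'), Sum.inr (q, c') => if p = q then Z r' c' else 0

private lemma pow_entry_nonneg {n : Type*} [Fintype n] [DecidableEq n]
    (M : Matrix n n ℝ) (h : ∀ i j, 0 ≤ M i j) (k : ℕ) : ∀ i j, 0 ≤ (M ^ k) i j := by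
  induction k with
  | zero => intro i j; rw [pow_zero]; by_cases hij : i = j <;> simp [Matrix.one_apply, hij]
  | succ k ih =>
    intro i j
    rw [pow_succ', Matrix.mul_apply]
    exact Finset.sum_nonneg fun c _ => mul_nonneg (h i c) (ih c j)

section Comb

variable {l m y w : ℕ}
    (U : Matrix (Fin l) (Fin l) ℝ) (Z : Matrix (Fin m) (Fin m) ℝ)
    (Y : Fin y → Matrix (Fin l) (Fin m) ℝ) (W : Fin w → Matrix (Fin m) (Fin l) ℝ)
    (T : Finset (Fin y × Fin w))

/-- first-exit auxiliary matrices -/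
private noncomputable def Faux (j : Fin w) : ℕ → Matrix (Fin m) (Fin l ⊕ Fin m) ℝ
  | 0 => 0
  | (k+1) => fun r x => (∑ b, W j r b * ((origMatrix U Z Y W) ^ k) (Sum.inl b) x)
      + ∑ c, Z r c * Faux j k c x

variable (hU : ∀ a b, 0 ≤ U a b) (hZ : ∀ a b, 0 ≤ Z a b)
    (hY : ∀ i a b, 0 ≤ Y i a b) (hW : ∀ j a b, 0 ≤ W j a b)

include hU hZ hY hW

private lemma origMatrix_nonneg : ∀ x x', 0 ≤ origMatrix U Z Y W x x' := by
  intro x x'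
  rcases x with a | r <;> rcases x' with b | c <;>
    simp only [origMatrix, Matrix.fromBlocks_apply₁₁, Matrix.fromBlocks_apply₁₂,
      Matrix.fromBlocks_apply₂₁, Matrix.fromBlocks_apply₂₂, Matrix.sum_apply]
  · exact hU a b
  · exact Finset.sum_nonneg fun i _ => hY i a c
  · exact Finset.sum_nonneg fun j _ => hW j r b
  · exact hZ r c

private lemma Faux_nonneg (j : Fin w) (k : ℕ) : ∀ r x, 0 ≤ Faux U Z Y W j k r x := by
  induction k with
  | zero => intro r x; simp [Faux]
  | succ k ih =>
    intro r x
    have h1 : 0 ≤ ∑ b, W j r b * ((origMatrix U Z Y W) ^ k) (Sum.inl b) x :=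
      Finset.sum_nonneg fun b _ => mul_nonneg (hW j r b)
        (pow_entry_nonneg _ (origMatrix_nonneg U Z Y W hU hZ hY hW) k _ _)
    have h2 : 0 ≤ ∑ c, Z r c * Faux U Z Y W j k c x :=
      Finset.sum_nonneg fun c _ => mul_nonneg (hZ r c) (ih c x)
    exact add_nonneg h1 h2

omit hU hZ hY hW in
/-- first-exit decomposition identity for powers of the original matrix -/
private lemma pow_inr_eq (k : ℕ) : ∀ (r : Fin m) (x : Fin l ⊕ Fin m),
    ((origMatrix U Z Y W) ^ k) (Sum.inr r) x
      = (Sum.elim (fun _ => (0:ℝ)) (fun c' => (Z ^ k) r c') x) + ∑ j, Faux U Z Y W j k r x := by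
  induction k with
  | zero =>
    intro r x
    rcases x with b | c' <;> simp [Faux, Matrix.one_apply]
  | succ k ih =>
    intro r x
    rw [pow_succ', Matrix.mul_apply, Fintype.sum_sum_type]
    have hW' : ∀ b : Fin l, (origMatrix U Z Y W) (Sum.inr r) (Sum.inl b) = ∑ j, W j r b := by
      intro b; simp [origMatrix, Matrix.fromBlocks, Matrix.sum_apply]
    have hZ' : ∀ c : Fin m, (origMatrix U Z Y W) (Sum.inr r) (Sum.inr c) = Z r c := by
      intro c; simp [origMatrix, Matrix.fromBlocks]
    simp only [hW', hZ']
    -- expand the second sum using ih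
    have : ∀ c : Fin m, Z r c * ((origMatrix U Z Y W) ^ k) (Sum.inr c) x
        = Z r c * (Sum.elim (fun _ => (0:ℝ)) (fun c' => (Z ^ k) c c') x)
          + ∑ j, Z r c * Faux U Z Y W j k c x := by
      intro c; rw [ih c x, mul_add, Finset.mul_sum]
    rw [Finset.sum_congr rfl fun c _ => this c]
    rw [Finset.sum_add_distrib]
    have hfaux : ∀ j, Faux U Z Y W j (k+1) r x
        = (∑ b, W j r b * ((origMatrix U Z Y W) ^ k) (Sum.inl b) x)
          + ∑ c, Z r c * Faux U Z Y W j k c x := fun j => rfl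
    have hsum1 : ∑ b, (∑ j, W j r b) * ((origMatrix U Z Y W) ^ k) (Sum.inl b) x
        = ∑ j, ∑ b, W j r b * ((origMatrix U Z Y W) ^ k) (Sum.inl b) x := by
      rw [Finset.sum_comm]
      exact Finset.sum_congr rfl fun b _ => by rw [Finset.sum_mul]
    have hsum2 : ∑ c, ∑ j, Z r c * Faux U Z Y W j k c x
        = ∑ j, ∑ c, Z r c * Faux U Z Y W j k c x := Finset.sum_comm
    have hz : ∑ c, Z r c * (Sum.elim (fun _ => (0:ℝ)) (fun c' => (Z ^ k) c c') x)
        = Sum.elim (fun _ => (0:ℝ)) (fun c' => (Z ^ (k+1)) r c') x := by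
      rcases x with b | c' <;> simp [pow_succ', Matrix.mul_apply]
    rw [hsum1, hsum2, hz]
    simp only [hfaux]
    rw [Finset.sum_add_distrib]
    ring
end Comb

section Main
variable {l m y w : ℕ}
    (U : Matrix (Fin l) (Fin l) ℝ) (Z : Matrix (Fin m) (Fin m) ℝ)
    (Y : Fin y → Matrix (Fin l) (Fin m) ℝ) (W : Fin w → Matrix (Fin m) (Fin l) ℝ)
    (T : Finset (Fin y × Fin w))
    (hU : ∀ a b, 0 ≤ U a b) (hZ : ∀ a b, 0 ≤ Z a b)
    (hY : ∀ i a b, 0 ≤ Y i a b) (hW : ∀ j a b, 0 ≤ W j a b)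

local notation "A" => thinnedSpecialization U Z Y W T
local notation "N" => origMatrix U Z Y W

/-- the projection map -/
private def proj : (Fin l ⊕ (↥T × Fin m)) → (Fin l ⊕ Fin m) :=
  Sum.elim Sum.inl (fun pc => Sum.inr pc.2)

/-- the `p`-pinned pure-`Z` upper bound term -/
private def dZ (k : ℕ) (p : ↥T) (r : Fin m) : (Fin l ⊕ (↥T × Fin m)) → ℝ :=
  Sum.elim (fun _ => 0) (fun qc => if p = qc.1 then (Z ^ k) r qc.2 else 0)

include hU hZ hY hW

private lemma main_induction (k : ℕ) :
    (∀ (a : Fin l) (z' : Fin l ⊕ (↥T × Fin m)),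
      ((A) ^ k) (Sum.inl a) z' ≤ ((N) ^ k) (Sum.inl a) (proj T z'))
    ∧ (∀ (p : ↥T) (r : Fin m) (z' : Fin l ⊕ (↥T × Fin m)),
      ((A) ^ k) (Sum.inr (p, r)) z'
        ≤ dZ Z T k p r z' + Faux U Z Y W p.1.2 k r (proj T z')) := by
  induction k with
  | zero =>
    constructor
    · intro a z'
      rcases z' with b | ⟨q, c⟩
      · by_cases hab : a = b <;> simp [Matrix.one_apply, proj, hab]
      · simp [Matrix.one_apply, proj]
    · intro p r z'
      rcases z' with b | ⟨q, c⟩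
      · simp [Matrix.one_apply, proj, dZ, Faux]
      · by_cases hpq : p = q
        · subst hpq
          by_cases hrc : r = c <;>
            simp [Matrix.one_apply, proj, dZ, Faux, hrc]
        · simp [Matrix.one_apply, proj, dZ, Faux, hpq, Sum.inr.injEq, Prod.mk.injEq]
  | succ k ih =>
    obtain ⟨iha, ihb⟩ := ih
    have hAnn : ∀ z z', 0 ≤ (A) z z' := by
      intro z z'
      rcases z with a | ⟨p, r⟩ <;> rcases z' with b | ⟨q, c⟩ <;>
        simp only [thinnedSpecialization]
      · exact hU a b
      · exact hY q.1.1 a c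
      · exact hW p.1.2 r b
      · split
        · exact hZ r c
        · exact le_rfl
    have hNk : ∀ x x', 0 ≤ ((N) ^ k) x x' :=
      pow_entry_nonneg _ (origMatrix_nonneg U Z Y W hU hZ hY hW) k
    have hAk : ∀ z z', 0 ≤ ((A) ^ k) z z' := pow_entry_nonneg _ hAnn k
    constructor
    · -- case (a)
      intro a z'
      set x := proj T z' with hx
      rw [pow_succ', Matrix.mul_apply, Fintype.sum_sum_type]
      have hA1 : ∀ b : Fin l, (A) (Sum.inl a) (Sum.inl b) = U a b := fun _ => rfl
      have hA2 : ∀ (p : ↥T) (c : Fin m),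
          (A) (Sum.inl a) (Sum.inr (p, c)) = Y p.1.1 a c := fun _ _ => rfl
      have hRHS : ((N) ^ (k+1)) (Sum.inl a) x
          = (∑ b, U a b * ((N) ^ k) (Sum.inl b) x)
            + ∑ c, (∑ i, Y i a c) * ((N) ^ k) (Sum.inr c) x := by
        rw [pow_succ', Matrix.mul_apply, Fintype.sum_sum_type]
        have hN1 : ∀ b : Fin l, (N) (Sum.inl a) (Sum.inl b) = U a b := by
          intro b; simp [origMatrix, Matrix.fromBlocks]
        have hN2 : ∀ c : Fin m, (N) (Sum.inl a) (Sum.inr c) = ∑ i, Y i a c := by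
          intro c; simp [origMatrix, Matrix.fromBlocks, Matrix.sum_apply]
        simp only [hN1, hN2]
      rw [hRHS]
      have hterm1 : ∑ b, (A) (Sum.inl a) (Sum.inl b) * ((A) ^ k) (Sum.inl b) z'
          ≤ ∑ b, U a b * ((N) ^ k) (Sum.inl b) x := by
        refine Finset.sum_le_sum fun b _ => ?_
        rw [hA1 b]
        exact mul_le_mul_of_nonneg_left (iha b z') (hU a b)
      have hterm2 : ∑ pc : ↥T × Fin m, (A) (Sum.inl a) (Sum.inr pc) * ((A) ^ k) (Sum.inr pc) z'
          ≤ ∑ c, (∑ i, Y i a c) * ((N) ^ k) (Sum.inr c) x := by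
        have step1 : ∑ pc : ↥T × Fin m, (A) (Sum.inl a) (Sum.inr pc) * ((A) ^ k) (Sum.inr pc) z'
            ≤ ∑ pc : ↥T × Fin m,
                Y pc.1.1.1 a pc.2 * (dZ Z T k pc.1 pc.2 z' + Faux U Z Y W pc.1.1.2 k pc.2 x) := by
          refine Finset.sum_le_sum fun pc _ => ?_
          rw [hA2 pc.1 pc.2]
          exact mul_le_mul_of_nonneg_left (ihb pc.1 pc.2 z') (hY _ a pc.2)
        refine step1.trans ?_
        have split : ∑ pc : ↥T × Fin m,
              Y pc.1.1.1 a pc.2 * (dZ Z T k pc.1 pc.2 z' + Faux U Z Y W pc.1.1.2 k pc.2 x)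
            = (∑ pc : ↥T × Fin m, Y pc.1.1.1 a pc.2 * dZ Z T k pc.1 pc.2 z')
              + ∑ pc : ↥T × Fin m, Y pc.1.1.1 a pc.2 * Faux U Z Y W pc.1.1.2 k pc.2 x := by
          rw [← Finset.sum_add_distrib]
          exact Finset.sum_congr rfl fun pc _ => by ring
        rw [split]
        have hZk : ∀ c c', 0 ≤ (Z ^ k) c c' := pow_entry_nonneg Z hZ k
        have hS1 : (∑ pc : ↥T × Fin m, Y pc.1.1.1 a pc.2 * dZ Z T k pc.1 pc.2 z')
            ≤ ∑ c, (∑ i, Y i a c)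
                * (Sum.elim (fun _ => (0:ℝ)) (fun c' => (Z ^ k) c c') x) := by
          rcases z' with b | ⟨q, c'⟩
          · simp [dZ, hx, proj]
          · have : ∀ pc : ↥T × Fin m, Y pc.1.1.1 a pc.2
                  * dZ Z T k pc.1 pc.2 (Sum.inr (q, c') : Fin l ⊕ (↥T × Fin m))
                = if pc.1 = q then Y pc.1.1.1 a pc.2 * (Z ^ k) pc.2 c' else 0 := by
              intro pc
              simp only [dZ, Sum.elim_inr]
              by_cases h : pc.1 = q <;> simp [h]
            rw [Finset.sum_congr rfl fun pc _ => this pc]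
            rw [Fintype.sum_prod_type]
            rw [Finset.sum_eq_single q (fun q' _ hq' => by
                simp [hq']) (fun h => absurd (Finset.mem_univ q) h)]
            simp only [if_true, hx, proj, Sum.elim_inr]
            refine Finset.sum_le_sum fun c _ => ?_
            exact mul_le_mul_of_nonneg_right
              (Finset.single_le_sum (fun i _ => hY i a c) (Finset.mem_univ q.1.1))
              (hZk c c')
        have hS2 : (∑ pc : ↥T × Fin m, Y pc.1.1.1 a pc.2 * Faux U Z Y W pc.1.1.2 k pc.2 x)
            ≤ ∑ c, (∑ i, Y i a c) * (∑ j, Faux U Z Y W j k c x) := by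
          have hFnn := Faux_nonneg U Z Y W hU hZ hY hW
          have e1 : ∑ pc : ↥T × Fin m, Y pc.1.1.1 a pc.2 * Faux U Z Y W pc.1.1.2 k pc.2 x
              = ∑ p : ↥T, ∑ c, Y p.1.1 a c * Faux U Z Y W p.1.2 k c x := by
            rw [Fintype.sum_prod_type]
          have e2 : ∑ p : ↥T, ∑ c, Y p.1.1 a c * Faux U Z Y W p.1.2 k c x
              = ∑ pr ∈ T, ∑ c, Y pr.1 a c * Faux U Z Y W pr.2 k c x := by
            exact Finset.sum_coe_sort T
              (fun pr => ∑ c, Y pr.1 a c * Faux U Z Y W pr.2 k c x)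
          have e3 : ∑ pr ∈ T, ∑ c, Y pr.1 a c * Faux U Z Y W pr.2 k c x
              ≤ ∑ pr : Fin y × Fin w, ∑ c, Y pr.1 a c * Faux U Z Y W pr.2 k c x := by
            refine Finset.sum_le_sum_of_subset_of_nonneg (Finset.subset_univ T) ?_
            intro pr _ _
            exact Finset.sum_nonneg fun c _ => mul_nonneg (hY _ a c) (hFnn _ k c x)
          have e4 : ∑ pr : Fin y × Fin w, ∑ c, Y pr.1 a c * Faux U Z Y W pr.2 k c x
              = ∑ c, (∑ i, Y i a c) * (∑ j, Faux U Z Y W j k c x) := by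
            rw [Fintype.sum_prod_type]
            have h1 : ∀ c : Fin m, (∑ i, Y i a c) * (∑ j, Faux U Z Y W j k c x)
                = ∑ i, ∑ j, Y i a c * Faux U Z Y W j k c x := by
              intro c; rw [Finset.sum_mul_sum]
            rw [Finset.sum_congr rfl fun c _ => h1 c]
            calc ∑ i, ∑ j, ∑ c, Y i a c * Faux U Z Y W j k c x
                = ∑ i, ∑ c, ∑ j, Y i a c * Faux U Z Y W j k c x :=
                  Finset.sum_congr rfl (fun i _ => Finset.sum_comm)
              _ = ∑ c, ∑ i, ∑ j, Y i a c * Faux U Z Y W j k c x := Finset.sum_comm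
          rw [e1, e2, ← e4]
          exact e3
        calc _ ≤ (∑ c, (∑ i, Y i a c)
                * (Sum.elim (fun _ => (0:ℝ)) (fun c' => (Z ^ k) c c') x))
              + ∑ c, (∑ i, Y i a c) * (∑ j, Faux U Z Y W j k c x) := add_le_add hS1 hS2
          _ = ∑ c, (∑ i, Y i a c) * ((N) ^ k) (Sum.inr c) x := by
              rw [← Finset.sum_add_distrib]
              refine Finset.sum_congr rfl fun c _ => ?_
              rw [pow_inr_eq U Z Y W k c x]
              ring
      exact add_le_add hterm1 hterm2
    · -- case (b)
      intro p r z'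
      set x := proj T z' with hx
      rw [pow_succ', Matrix.mul_apply, Fintype.sum_sum_type]
      have hterm1 : ∑ b, (A) (Sum.inr (p, r)) (Sum.inl b) * ((A) ^ k) (Sum.inl b) z'
          ≤ ∑ b, W p.1.2 r b * ((N) ^ k) (Sum.inl b) x := by
        refine Finset.sum_le_sum fun b _ => ?_
        exact mul_le_mul_of_nonneg_left (iha b z') (hW p.1.2 r b)
      have hcollapse : ∑ qc : ↥T × Fin m,
            (A) (Sum.inr (p, r)) (Sum.inr qc) * ((A) ^ k) (Sum.inr qc) z'
          = ∑ c, Z r c * ((A) ^ k) (Sum.inr (p, c)) z' := by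
        rw [Fintype.sum_prod_type]
        rw [Finset.sum_eq_single p (fun q' _ hq' => by
            refine Finset.sum_eq_zero fun c _ => ?_
            have hne : ¬ p = q' := fun h => hq' h.symm
            have : (A) (Sum.inr (p, r)) (Sum.inr (q', c)) = 0 := by
              simp [thinnedSpecialization, hne]
            rw [this, zero_mul]) (fun h => absurd (Finset.mem_univ p) h)]
        refine Finset.sum_congr rfl fun c _ => ?_
        have : (A) (Sum.inr (p, r)) (Sum.inr (p, c)) = Z r c := by
          simp [thinnedSpecialization]
        rw [this]
      have hterm2 : ∑ c, Z r c * ((A) ^ k) (Sum.inr (p, c)) z'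
          ≤ (∑ c, Z r c * dZ Z T k p c z') + ∑ c, Z r c * Faux U Z Y W p.1.2 k c x := by
        rw [← Finset.sum_add_distrib]
        refine Finset.sum_le_sum fun c _ => ?_
        rw [← mul_add]
        exact mul_le_mul_of_nonneg_left (ihb p c z') (hZ r c)
      have hdZ : ∑ c, Z r c * dZ Z T k p c z' = dZ Z T (k+1) p r z' := by
        rcases z' with b | ⟨q, c'⟩
        · simp [dZ]
        · simp only [dZ, Sum.elim_inr]
          by_cases h : p = q
          · simp only [h, if_true]
            rw [pow_succ', Matrix.mul_apply]
          · simp [h]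
      have hFaux : Faux U Z Y W p.1.2 (k+1) r x
          = (∑ b, W p.1.2 r b * ((N) ^ k) (Sum.inl b) x)
            + ∑ c, Z r c * Faux U Z Y W p.1.2 k c x := rfl
      calc _ ≤ (∑ b, W p.1.2 r b * ((N) ^ k) (Sum.inl b) x)
            + ((∑ c, Z r c * dZ Z T k p c z') + ∑ c, Z r c * Faux U Z Y W p.1.2 k c x) := by
            rw [hcollapse]; exact add_le_add hterm1 hterm2
        _ = dZ Z T (k+1) p r z' + Faux U Z Y W p.1.2 (k+1) r x := by
            rw [hdZ, hFaux]; ring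

private lemma entrywise_pow_le (k : ℕ) (z z' : Fin l ⊕ (↥T × Fin m)) :
    ((A) ^ k) z z' ≤ ((N) ^ k) (proj T z) (proj T z') := by
  obtain ⟨iha, ihb⟩ := main_induction U Z Y W T hU hZ hY hW k
  rcases z with a | ⟨p, r⟩
  · exact iha a z'
  · refine (ihb p r z').trans ?_
    rw [show proj T (Sum.inr (p, r)) = Sum.inr r from rfl, pow_inr_eq U Z Y W k r (proj T z')]
    have hdz : dZ Z T k p r z'
        ≤ Sum.elim (fun _ => (0:ℝ)) (fun c' => (Z ^ k) r c') (proj T z') := by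
      rcases z' with b | ⟨q, c'⟩
      · simp [dZ, proj]
      · simp only [dZ, proj, Sum.elim_inr]
        split
        · exact le_rfl
        · exact pow_entry_nonneg Z hZ k r c'
    have hF : Faux U Z Y W p.1.2 k r (proj T z') ≤ ∑ j, Faux U Z Y W j k r (proj T z') :=
      Finset.single_le_sum
        (fun j _ => Faux_nonneg U Z Y W hU hZ hY hW j k r (proj T z'))
        (Finset.mem_univ p.1.2)
    exact add_le_add hdz hF

private lemma thinned_nonneg : ∀ z z', 0 ≤ (A) z z' := by
  intro z z'
  rcases z with a | ⟨p, r⟩ <;> rcases z' with b | ⟨q, c⟩ <;>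
    simp only [thinnedSpecialization]
  · exact hU a b
  · exact hY q.1.1 a c
  · exact hW p.1.2 r b
  · split
    · exact hZ r c
    · exact le_rfl
end Main

private lemma nnnorm_map_le {n₁ n₂ : Type*} [Fintype n₁] [DecidableEq n₁]
    [Fintype n₂] [DecidableEq n₂]
    (S : Matrix n₁ n₁ ℝ) (R : Matrix n₂ n₂ ℝ) (φ : n₁ → n₂) (K : ℝ≥0)
    (hS : ∀ z z', 0 ≤ S z z') (hR : ∀ x x', 0 ≤ R x x')
    (hb : ∀ z z', S z z' ≤ R (φ z) (φ z'))
    (hfib : ∀ x : n₂, (∑ z' : n₁, R x (φ z')) ≤ (K:ℝ) * ∑ x' : n₂, R x x') :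
    ‖S.map Complex.ofReal‖₊ ≤ K * ‖R.map Complex.ofReal‖₊ := by
  rw [Matrix.linfty_opNNNorm_def]
  refine Finset.sup_le fun z _ => ?_
  rw [← NNReal.coe_le_coe, NNReal.coe_mul, NNReal.coe_sum]
  have eS : ∀ z' : n₁, (‖(S.map Complex.ofReal) z z'‖₊ : ℝ) = S z z' := by
    intro z'
    rw [coe_nnnorm, Matrix.map_apply, Complex.norm_real, Real.norm_of_nonneg (hS z z')]
  have eR : ∀ (x x' : n₂), (‖(R.map Complex.ofReal) x x'‖₊ : ℝ) = R x x' := by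
    intro x x'
    rw [coe_nnnorm, Matrix.map_apply, Complex.norm_real, Real.norm_of_nonneg (hR x x')]
  calc ∑ z', (‖(S.map Complex.ofReal) z z'‖₊ : ℝ)
      = ∑ z', S z z' := Finset.sum_congr rfl fun z' _ => eS z'
    _ ≤ ∑ z', R (φ z) (φ z') := Finset.sum_le_sum fun z' _ => hb z z'
    _ ≤ (K:ℝ) * ∑ x', R (φ z) x' := hfib (φ z)
    _ = (K:ℝ) * ∑ x', (‖(R.map Complex.ofReal) (φ z) x'‖₊ : ℝ) := by
        rw [Finset.sum_congr rfl fun x' _ => (eR (φ z) x')]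
    _ ≤ (K:ℝ) * (‖R.map Complex.ofReal‖₊ : ℝ) := by
        refine mul_le_mul_of_nonneg_left ?_ K.coe_nonneg
        rw [← NNReal.coe_sum, NNReal.coe_le_coe, Matrix.linfty_opNNNorm_def]
        exact Finset.le_sup (f := fun i => ∑ j, ‖(R.map Complex.ofReal) i j‖₊)
          (Finset.mem_univ (φ z))


/-- the spectral radius of any thinned specialization of a nonnegative block
matrix `M` is at most the spectral radius of `M`. -/
theorem specRad_thinnedSpecialization_le
    {l m y w : ℕ} (hl : 1 ≤ l) (hm : 1 ≤ m) (hy : 1 ≤ y) (hw : 1 ≤ w)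
    (U : Matrix (Fin l) (Fin l) ℝ) (Z : Matrix (Fin m) (Fin m) ℝ)
    (Y : Fin y → Matrix (Fin l) (Fin m) ℝ) (W : Fin w → Matrix (Fin m) (Fin l) ℝ)
    (hU : ∀ a b, 0 ≤ U a b) (hZ : ∀ a b, 0 ≤ Z a b)
    (hY : ∀ i a b, 0 ≤ Y i a b) (hW : ∀ j a b, 0 ≤ W j a b)
    (T : Finset (Fin y × Fin w)) :
    specRad (thinnedSpecialization U Z Y W T) ≤ specRad (origMatrix U Z Y W) := by
  classical
  haveI : Nonempty (Fin l) := ⟨⟨0, hl⟩⟩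
  haveI : Nonempty (Fin l ⊕ (↥T × Fin m)) := ⟨Sum.inl ⟨0, hl⟩⟩
  haveI : Nonempty (Fin l ⊕ Fin m) := ⟨Sum.inl ⟨0, hl⟩⟩
  refine specRad_le_of_pow_le _ _ ((T.card : ℝ≥0) + 1) (by positivity) ?_
  intro k
  have hAnn := thinned_nonneg U Z Y W T hU hZ hY hW
  have hNnn := origMatrix_nonneg U Z Y W hU hZ hY hW
  have hAk := pow_entry_nonneg _ hAnn k
  have hNk := pow_entry_nonneg _ hNnn k
  refine nnnorm_map_le _ _ (proj T) _ hAk hNk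
    (entrywise_pow_le U Z Y W T hU hZ hY hW k) ?_
  intro x
  push_cast
  rw [Fintype.sum_sum_type, Fintype.sum_sum_type]
  have e1 : ∑ pc : ↥T × Fin m, ((origMatrix U Z Y W) ^ k) x (proj T (Sum.inr pc))
      = (T.card : ℝ) * ∑ c, ((origMatrix U Z Y W) ^ k) x (Sum.inr c) := by
    calc ∑ pc : ↥T × Fin m, ((origMatrix U Z Y W) ^ k) x (proj T (Sum.inr pc))
        = ∑ _p : ↥T, ∑ c, ((origMatrix U Z Y W) ^ k) x (Sum.inr c) := by
          rw [Fintype.sum_prod_type]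
          exact Finset.sum_congr rfl fun p _ => Finset.sum_congr rfl fun c _ => rfl
      _ = (T.card : ℝ) * ∑ c, ((origMatrix U Z Y W) ^ k) x (Sum.inr c) := by
          rw [Finset.sum_const, Finset.card_univ, Fintype.card_coe, nsmul_eq_mul]
  have e2 : ∑ b : Fin l, ((origMatrix U Z Y W) ^ k) x (proj T (Sum.inl b))
      = ∑ b : Fin l, ((origMatrix U Z Y W) ^ k) x (Sum.inl b) :=
    Finset.sum_congr rfl fun b _ => rfl
  rw [e2, e1]
  have S1nn : 0 ≤ ∑ b, ((origMatrix U Z Y W) ^ k) x (Sum.inl b) :=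
    Finset.sum_nonneg fun b _ => hNk x _
  have S2nn : 0 ≤ ∑ c, ((origMatrix U Z Y W) ^ k) x (Sum.inr c) :=
    Finset.sum_nonneg fun c _ => hNk x _
  have hc : (0:ℝ) ≤ (T.card : ℝ) := Nat.cast_nonneg _
  nlinarith [mul_nonneg hc S1nn, mul_nonneg hc S2nn]
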